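/- For every natural number n ≥ 1, the center of the semigroup Sₙ = ⟨a, b | a^{n+1} = b² = 0, aba = 0, b aⁱ b = 0 ∀ i ≥ 1⟩ equals {0, aⁿb, b aⁿ}. -/

import Mathlib

/-- The commuting graph of a semigroup: vertices are the non-central
elements, two distinct vertices are adjacent iff they commute. -/
def CommutingGraph (S : Type*) [Semigroup S] :
    SimpleGraph {x : S // x ∉ Set.center S} where
  Adj a b := a ≠ b ∧ (a : S) * b = (b : S) * a
  symm := ⟨fun _ _ ⟨h, hc⟩ => ⟨h.symm, hc.symm⟩⟩
  loopless := ⟨fun _ ⟨h, _⟩ => h rfl⟩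

/-- The free semigroup with zero on the two generators `a = of false`, `b = of true`. -/
abbrev W2 := WithZero (FreeSemigroup Bool)

/-- The generator `a`. -/
def ga : FreeSemigroup Bool := FreeSemigroup.of false

/-- The generator `b`. -/
def gb : FreeSemigroup Bool := FreeSemigroup.of true

/-- `fsPow x k = x^(k+1)` (positive powers in a semigroup). -/
def fsPow (x : FreeSemigroup Bool) : ℕ → FreeSemigroup Bool
  | 0 => x
  | k + 1 => fsPow x k * x

/-- `apow i` is `a^i` for `i ≥ 1` (junk value `a` at `i = 0`). -/
def apow (i : ℕ) : FreeSemigroup Bool := fsPow ga (i - 1)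

/-- The defining relations of `Sₙ`: `a^(n+1) = b² = 0`, `aba = 0`, `b aⁱ b = 0` for `i ≥ 1`. -/
def SnRel (n : ℕ) : W2 → W2 → Prop := fun p q =>
  (p = ((apow (n + 1) : FreeSemigroup Bool) : W2) ∧ q = 0) ∨
  (p = ((gb * gb : FreeSemigroup Bool) : W2) ∧ q = 0) ∨
  (p = ((ga * gb * ga : FreeSemigroup Bool) : W2) ∧ q = 0) ∨
  (∃ i : ℕ, 1 ≤ i ∧ p = ((gb * apow i * gb : FreeSemigroup Bool) : W2) ∧ q = 0)

/-- The congruence generated by the relations of `Sₙ`. -/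
def SnCon (n : ℕ) : Con W2 := conGen (SnRel n)

/-- The semigroup `Sₙ = ⟨a, b | a^(n+1) = b² = 0, aba = baⁱb = 0 ∀ i ≥ 1⟩`. -/
def Sn (n : ℕ) : Type := (SnCon n).Quotient

instance (n : ℕ) : Semigroup (Sn n) := Con.semigroup _

/-- The canonical projection onto `Sₙ`. -/
def smk (n : ℕ) : W2 → Sn n := (SnCon n).toQuotient

/-! ### A concrete model -/

inductive MM : Type
  | Z | A (i : ℕ) | AB (i : ℕ) | BA (i : ℕ)
deriving DecidableEq

namespace MM

def valid (n : ℕ) : MM → Prop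
  | Z => True
  | A i => 1 ≤ i ∧ i ≤ n
  | AB i => i ≤ n
  | BA i => 1 ≤ i ∧ i ≤ n

instance (n : ℕ) : DecidablePred (valid n) := fun x => by
  cases x <;> unfold valid <;> infer_instance

def nrm (n : ℕ) (x : MM) : MM := if valid n x then x else Z

def core (n : ℕ) : MM → MM → MM
  | A i, A j => if i + j ≤ n then A (i + j) else Z
  | A i, AB j => if i + j ≤ n then AB (i + j) else Z
  | AB i, A j => if i = 0 ∧ j ≤ n then BA j else Z
  | BA i, A j => if i + j ≤ n then BA (i + j) else Z
  | _, _ => Z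

lemma core_Z_left (n : ℕ) (y : MM) : core n Z y = Z := by cases y <;> rfl
lemma core_Z_right (n : ℕ) (x : MM) : core n x Z = Z := by cases x <;> rfl

lemma nrm_valid (n : ℕ) (x : MM) : valid n (nrm n x) := by
  unfold nrm; split
  · assumption
  · trivial

lemma nrm_of_valid (n : ℕ) {x : MM} (h : valid n x) : nrm n x = x := if_pos h

lemma core_valid (n : ℕ) {x y : MM} (hx : valid n x) (hy : valid n y) :
    valid n (core n x y) := by
  cases x <;> cases y <;> simp only [core, valid] at * <;> split_ifs <;>
    simp_all [valid] <;> omega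

lemma core_assoc (n : ℕ) {x y z : MM} (hx : valid n x) (hy : valid n y)
    (hz : valid n z) : core n (core n x y) z = core n x (core n y z) := by
  cases x <;> cases y <;> cases z <;>
    simp only [core, valid] at * <;> split_ifs <;>
    first
      | rfl
      | (simp_all only [core, core_Z_left, core_Z_right]; split_ifs <;> simp_all <;> omega)

end MM

def Md (n : ℕ) : Type := MM

instance (n : ℕ) : Semigroup (Md n) where
  mul x y := MM.core n (MM.nrm n x) (MM.nrm n y)
  mul_assoc x y z := by
    show MM.core n (MM.nrm n (MM.core n (MM.nrm n x) (MM.nrm n y))) (MM.nrm n z)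
       = MM.core n (MM.nrm n x) (MM.nrm n (MM.core n (MM.nrm n y) (MM.nrm n z)))
    rw [MM.nrm_of_valid n (MM.core_valid n (MM.nrm_valid n x) (MM.nrm_valid n y)),
        MM.nrm_of_valid n (MM.core_valid n (MM.nrm_valid n y) (MM.nrm_valid n z)),
        MM.core_assoc n (MM.nrm_valid n x) (MM.nrm_valid n y) (MM.nrm_valid n z)]

def mZ (n : ℕ) : Md n := MM.Z
def mA (n : ℕ) (i : ℕ) : Md n := MM.A i
def mAB (n : ℕ) (i : ℕ) : Md n := MM.AB i
def mBA (n : ℕ) (i : ℕ) : Md n := MM.BA i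

lemma mdmul (n : ℕ) (x y : Md n) :
    x * y = MM.core n (MM.nrm n x) (MM.nrm n y) := rfl

/-- evaluation of words in the model -/
def fM (n : ℕ) : FreeSemigroup Bool →ₙ* Md n :=
  FreeSemigroup.lift (fun c => if c then MM.AB 0 else MM.A 1)

lemma fM_ga (n : ℕ) : fM n ga = mA n 1 := by
  simp [fM, ga, mA, FreeSemigroup.lift_of]; rfl

lemma fM_gb (n : ℕ) : fM n gb = mAB n 0 := by
  simp [fM, gb, mAB, FreeSemigroup.lift_of]; rfl

lemma fM_apow (n : ℕ) (hn : 1 ≤ n) : ∀ k, fM n (fsPow ga k) = MM.nrm n (mA n (k + 1)) := by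
  intro k
  induction k with
  | zero =>
    rw [show fsPow ga 0 = ga from rfl, fM_ga,
        MM.nrm_of_valid n (x := mA n 1) ⟨le_refl 1, hn⟩]
  | succ k ih =>
    rw [show fsPow ga (k+1) = fsPow ga k * ga from rfl, map_mul, ih, fM_ga]
    show MM.core n (MM.nrm n (MM.nrm n (MM.A (k + 1)))) (MM.nrm n (MM.A 1)) =
      MM.nrm n (MM.A (k + 1 + 1))
    rw [MM.nrm_of_valid n (MM.nrm_valid n _),
        MM.nrm_of_valid n (x := MM.A 1) ⟨le_refl 1, hn⟩]
    show MM.core n (MM.nrm n (MM.A (k+1))) (MM.A 1) = MM.nrm n (MM.A (k+2))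
    by_cases h1 : k + 1 + 1 ≤ n
    · rw [MM.nrm_of_valid n (x := MM.A (k+1)) ⟨by omega, by omega⟩,
        MM.nrm_of_valid n (x := MM.A (k+2)) ⟨by omega, h1⟩]
      show (if (k+1)+1 ≤ n then MM.A ((k+1)+1) else MM.Z) = MM.A (k+2)
      rw [if_pos h1]
    · rw [show MM.nrm n (MM.A (k+2)) = MM.Z from if_neg (fun h => h1 h.2)]
      by_cases h2 : k + 1 ≤ n
      · rw [MM.nrm_of_valid n (x := MM.A (k+1)) ⟨by omega, h2⟩]
        show (if (k+1)+1 ≤ n then MM.A ((k+1)+1) else MM.Z) = MM.Z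
        rw [if_neg h1]
      · rw [show MM.nrm n (MM.A (k+1)) = MM.Z from if_neg (fun h => h2 h.2)]
        rfl

lemma fM_apow' (n : ℕ) (hn : 1 ≤ n) (i : ℕ) (hi : 1 ≤ i) :
    fM n (apow i) = MM.nrm n (mA n i) := by
  unfold apow
  rw [fM_apow n hn (i-1)]
  have : i - 1 + 1 = i := by omega
  rw [this]

/-- evaluation on the free semigroup with zero -/
def F (n : ℕ) : W2 → Md n := WithZero.recZeroCoe MM.Z (fM n)

lemma F_zero (n : ℕ) : F n 0 = mZ n := rfl
lemma F_coe (n : ℕ) (w : FreeSemigroup Bool) : F n (w : W2) = fM n w := rfl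

lemma Z_mul_md (n : ℕ) (x : Md n) : mZ n * x = mZ n := by
  rw [mdmul, MM.nrm_of_valid n (x := mZ n) trivial, mZ]
  exact MM.core_Z_left n _

lemma mul_Z_md (n : ℕ) (x : Md n) : x * mZ n = mZ n := by
  rw [mdmul, MM.nrm_of_valid n (x := mZ n) trivial, mZ]
  exact MM.core_Z_right n _

lemma F_mul (n : ℕ) (x y : W2) : F n (x * y) = F n x * F n y := by
  induction x using WithZero.recZeroCoe with
  | zero => rw [zero_mul, F_zero, Z_mul_md]
  | coe u =>
    induction y using WithZero.recZeroCoe with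
    | zero => rw [mul_zero, F_zero, mul_Z_md]
    | coe v => rw [← WithZero.coe_mul, F_coe, F_coe, F_coe, map_mul]

/-! ### Basic identities in `Sₙ` -/

def sm (n : ℕ) (w : FreeSemigroup Bool) : Sn n := smk n (w : W2)
def zz (n : ℕ) : Sn n := smk n 0
def sa (n : ℕ) (i : ℕ) : Sn n := sm n (apow i)
def sb (n : ℕ) : Sn n := sm n gb

lemma smk_mul (n : ℕ) (x y : W2) : smk n (x * y) = smk n x * smk n y := rfl

lemma sm_mul (n : ℕ) (u v : FreeSemigroup Bool) : sm n (u * v) = sm n u * sm n v := by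
  unfold sm; rw [WithZero.coe_mul]; rfl

lemma zz_mul (n : ℕ) (x : Sn n) : zz n * x = zz n :=
  Con.induction_on x (fun w => show smk n 0 * smk n w = smk n 0 by
    rw [← smk_mul, zero_mul])

lemma mul_zz (n : ℕ) (x : Sn n) : x * zz n = zz n :=
  Con.induction_on x (fun w => show smk n w * smk n 0 = smk n 0 by
    rw [← smk_mul, mul_zero])

lemma rel_eq (n : ℕ) {p q : W2} (h : SnRel n p q) : smk n p = smk n q :=
  (SnCon n).eq.2 (ConGen.Rel.of p q h)

lemma r1 (n : ℕ) : sa n (n + 1) = zz n := rel_eq n (Or.inl ⟨rfl, rfl⟩)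

lemma r2 (n : ℕ) : sb n * sb n = zz n := by
  show sm n gb * sm n gb = zz n
  rw [← sm_mul]; exact rel_eq n (Or.inr (Or.inl ⟨rfl, rfl⟩))

lemma apow_one : apow 1 = ga := rfl

lemma r3 (n : ℕ) : sa n 1 * sb n * sa n 1 = zz n := by
  show sm n (apow 1) * sm n gb * sm n (apow 1) = zz n
  rw [apow_one, ← sm_mul, ← sm_mul]
  exact rel_eq n (Or.inr (Or.inr (Or.inl ⟨rfl, rfl⟩)))

lemma r4 (n : ℕ) {i : ℕ} (hi : 1 ≤ i) : sb n * sa n i * sb n = zz n := by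
  show sm n gb * sm n (apow i) * sm n gb = zz n
  rw [← sm_mul, ← sm_mul]
  exact rel_eq n (Or.inr (Or.inr (Or.inr ⟨i, hi, rfl, rfl⟩)))

lemma fsPow_add (x : FreeSemigroup Bool) (p q : ℕ) :
    fsPow x p * fsPow x q = fsPow x (p + q + 1) := by
  induction q with
  | zero => rfl
  | succ q ih =>
    show fsPow x p * (fsPow x q * x) = _
    rw [← mul_assoc, ih]
    rfl

lemma apow_add {i j : ℕ} (hi : 1 ≤ i) (hj : 1 ≤ j) : apow i * apow j = apow (i + j) := by
  unfold apow
  rw [fsPow_add]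
  congr 1
  omega

lemma sa_mul (n : ℕ) {i j : ℕ} (hi : 1 ≤ i) (hj : 1 ≤ j) :
    sa n i * sa n j = sa n (i + j) := by
  unfold sa; rw [← sm_mul, apow_add hi hj]

lemma sa_hi (n : ℕ) {m : ℕ} (h : n + 1 ≤ m) : sa n m = zz n := by
  rcases eq_or_lt_of_le h with h' | h'
  · rw [← h']; exact r1 n
  · have hm : m = (n + 1) + (m - (n + 1)) := by omega
    rw [hm, ← sa_mul n (by omega) (by omega), r1, zz_mul]

lemma ab_a (n : ℕ) {j : ℕ} (hj : 1 ≤ j) : sa n 1 * sb n * sa n j = zz n := by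
  rcases eq_or_lt_of_le hj with h | h
  · rw [← h]; exact r3 n
  · have hj' : sa n j = sa n 1 * sa n (j - 1) := by
      rw [sa_mul n le_rfl (by omega)]; congr 1; omega
    rw [hj', ← mul_assoc, r3, zz_mul]

lemma absa (n : ℕ) {i j : ℕ} (hi : 1 ≤ i) (hj : 1 ≤ j) :
    sa n i * sb n * sa n j = zz n := by
  rcases eq_or_lt_of_le hi with h | h
  · rw [← h]; exact ab_a n hj
  · have hi' : sa n i = sa n (i - 1) * sa n 1 := by
      rw [sa_mul n (by omega) le_rfl]; congr 1; omega
    rw [hi', mul_assoc (sa n (i - 1)), mul_assoc (sa n (i - 1)),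
        ab_a n hj, mul_zz]

/-! ### product lemmas -/

lemma L2 (n : ℕ) {i : ℕ} (hi : 1 ≤ i) (j : ℕ) :
    (sa n i * sb n) * (sb n * sa n j) = zz n := by
  rw [← mul_assoc, mul_assoc (sa n i), r2, mul_zz, zz_mul]

lemma L3 (n : ℕ) {i j : ℕ} (hi : 1 ≤ i) (hj : 1 ≤ j) :
    (sb n * sa n i) * (sa n j * sb n) = zz n := by
  rw [← mul_assoc, mul_assoc (sb n), sa_mul n hi hj, r4 n (by omega)]

lemma L4 (n : ℕ) {i : ℕ} (hi : 1 ≤ i) (j : ℕ) :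
    (sb n * sa n i) * (sb n * sa n j) = zz n := by
  rw [← mul_assoc, r4 n hi, zz_mul]

lemma L1 (n : ℕ) {i j : ℕ} (hi : 1 ≤ i) (hj : 1 ≤ j) :
    (sa n i * sb n) * (sa n j * sb n) = zz n := by
  rw [← mul_assoc, absa n hi hj, zz_mul]

lemma L5 (n : ℕ) {j : ℕ} (hj : 1 ≤ j) : sb n * (sa n j * sb n) = zz n := by
  rw [← mul_assoc, r4 n hj]

lemma L6 (n : ℕ) (i : ℕ) : (sa n i * sb n) * sb n = zz n := by
  rw [mul_assoc, r2, mul_zz]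

lemma L7 (n : ℕ) (j : ℕ) : sb n * (sb n * sa n j) = zz n := by
  rw [← mul_assoc, r2, zz_mul]

lemma L9 (n : ℕ) {i j : ℕ} (hi : 1 ≤ i) (hj : 1 ≤ j) :
    sa n i * (sb n * sa n j) = zz n := by
  rw [← mul_assoc, absa n hi hj]

lemma L11 (n : ℕ) {i j : ℕ} (hi : 1 ≤ i) (hj : 1 ≤ j) :
    sa n i * (sa n j * sb n) = sa n (i + j) * sb n := by
  rw [← mul_assoc, sa_mul n hi hj]

lemma L12 (n : ℕ) {i j : ℕ} (hi : 1 ≤ i) (hj : 1 ≤ j) :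
    (sb n * sa n i) * sa n j = sb n * sa n (i + j) := by
  rw [mul_assoc, sa_mul n hi hj]

/-! ### normal forms -/

def Good (n : ℕ) (x : Sn n) : Prop :=
  x = zz n ∨ (∃ i, 1 ≤ i ∧ i ≤ n ∧ x = sa n i) ∨ x = sb n ∨
  (∃ i, 1 ≤ i ∧ i ≤ n ∧ x = sa n i * sb n) ∨ (∃ i, 1 ≤ i ∧ i ≤ n ∧ x = sb n * sa n i)

lemma good_sa (n : ℕ) {m : ℕ} (hm : 1 ≤ m) : Good n (sa n m) := by
  by_cases h : m ≤ n
  · exact Or.inr (Or.inl ⟨m, hm, h, rfl⟩)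
  · exact Or.inl (sa_hi n (by omega))

lemma good_sab (n : ℕ) {m : ℕ} (hm : 1 ≤ m) : Good n (sa n m * sb n) := by
  by_cases h : m ≤ n
  · exact Or.inr (Or.inr (Or.inr (Or.inl ⟨m, hm, h, rfl⟩)))
  · rw [sa_hi n (by omega), zz_mul]; exact Or.inl rfl

lemma good_bsa (n : ℕ) {m : ℕ} (hm : 1 ≤ m) : Good n (sb n * sa n m) := by
  by_cases h : m ≤ n
  · exact Or.inr (Or.inr (Or.inr (Or.inr ⟨m, hm, h, rfl⟩)))
  · rw [sa_hi n (by omega), mul_zz]; exact Or.inl rfl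

lemma good_mul (n : ℕ) {x y : Sn n} (hx : Good n x) (hy : Good n y) : Good n (x * y) := by
  rcases hx with rfl | ⟨i, hi1, hin, rfl⟩ | rfl | ⟨i, hi1, hin, rfl⟩ | ⟨i, hi1, hin, rfl⟩
  · rw [zz_mul]; exact Or.inl rfl
  · rcases hy with rfl | ⟨j, hj1, hjn, rfl⟩ | rfl | ⟨j, hj1, hjn, rfl⟩ | ⟨j, hj1, hjn, rfl⟩
    · rw [mul_zz]; exact Or.inl rfl
    · rw [sa_mul n hi1 hj1]; exact good_sa n (by omega)
    · exact Or.inr (Or.inr (Or.inr (Or.inl ⟨i, hi1, hin, rfl⟩)))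
    · rw [L11 n hi1 hj1]; exact good_sab n (by omega)
    · rw [L9 n hi1 hj1]; exact Or.inl rfl
  · rcases hy with rfl | ⟨j, hj1, hjn, rfl⟩ | rfl | ⟨j, hj1, hjn, rfl⟩ | ⟨j, hj1, hjn, rfl⟩
    · rw [mul_zz]; exact Or.inl rfl
    · exact Or.inr (Or.inr (Or.inr (Or.inr ⟨j, hj1, hjn, rfl⟩)))
    · rw [r2]; exact Or.inl rfl
    · rw [L5 n hj1]; exact Or.inl rfl
    · rw [L7]; exact Or.inl rfl
  · rcases hy with rfl | ⟨j, hj1, hjn, rfl⟩ | rfl | ⟨j, hj1, hjn, rfl⟩ | ⟨j, hj1, hjn, rfl⟩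
    · rw [mul_zz]; exact Or.inl rfl
    · rw [absa n hi1 hj1]; exact Or.inl rfl
    · rw [L6]; exact Or.inl rfl
    · rw [L1 n hi1 hj1]; exact Or.inl rfl
    · rw [L2 n hi1]; exact Or.inl rfl
  · rcases hy with rfl | ⟨j, hj1, hjn, rfl⟩ | rfl | ⟨j, hj1, hjn, rfl⟩ | ⟨j, hj1, hjn, rfl⟩
    · rw [mul_zz]; exact Or.inl rfl
    · rw [L12 n hi1 hj1]; exact good_bsa n (by omega)
    · rw [r4 n hi1]; exact Or.inl rfl
    · rw [L3 n hi1 hj1]; exact Or.inl rfl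
    · rw [L4 n hi1]; exact Or.inl rfl

lemma good_all (n : ℕ) (hn : 1 ≤ n) (x : Sn n) : Good n x := by
  refine Con.induction_on x (fun w => ?_)
  induction w using WithZero.recZeroCoe with
  | zero => exact Or.inl rfl
  | coe u =>
    show Good n (sm n u)
    refine FreeSemigroup.recOnMul (C := fun u => Good n (sm n u)) u (fun c => ?_)
      (fun c y hc hy => ?_)
    · cases c
      · exact Or.inr (Or.inl ⟨1, le_rfl, hn, rfl⟩)
      · exact Or.inr (Or.inr (Or.inl rfl))
    · show Good n (sm n (FreeSemigroup.of c * y))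
      rw [sm_mul]
      exact good_mul n hc hy

/-! ### the invariant `phi : Sn n → Md n` -/

lemma md_AB0_valid (n : ℕ) : MM.valid n (MM.AB 0) := Nat.zero_le n

lemma hker (n : ℕ) (hn : 1 ≤ n) : SnCon n ≤ (Con.mk (Setoid.ker (F n))
    (fun {a b c d} h1 h2 => by
      show F n (a * c) = F n (b * d)
      rw [F_mul, F_mul]
      exact congrArg₂ (· * ·) h1 h2)) := by
  apply Con.conGen_le.2
  rintro p q (⟨rfl, rfl⟩ | ⟨rfl, rfl⟩ | ⟨rfl, rfl⟩ | ⟨i, hi, rfl, rfl⟩) <;>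
    show F n _ = F n 0
  · rw [F_coe, F_zero, fM_apow' n hn _ (by omega)]
    show MM.nrm n (MM.A (n+1)) = MM.Z
    exact if_neg (fun h : MM.valid n (MM.A (n+1)) => by simp only [MM.valid] at h; omega)
  · rw [F_coe, F_zero, map_mul, fM_gb, mdmul,
      MM.nrm_of_valid n (x := mAB n 0) (md_AB0_valid n)]
    rfl
  · rw [F_coe, F_zero, map_mul, map_mul, fM_ga, fM_gb]
    have h1 : mA n 1 * mAB n 0 = mAB n 1 := by
      rw [mdmul, MM.nrm_of_valid n (x := mA n 1) ⟨le_rfl, hn⟩,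
        MM.nrm_of_valid n (x := mAB n 0) (md_AB0_valid n)]
      show (if 1 + 0 ≤ n then MM.AB (1 + 0) else MM.Z) = MM.AB 1
      rw [if_pos (by omega)]
    rw [h1, mdmul, MM.nrm_of_valid n (x := mA n 1) ⟨le_rfl, hn⟩,
      MM.nrm_of_valid n (x := mAB n 1) (show (1 : ℕ) ≤ n from hn)]
    rfl
  · rw [F_coe, F_zero, map_mul, map_mul, fM_gb, fM_apow' n hn i hi]
    by_cases h : i ≤ n
    · rw [MM.nrm_of_valid n (x := mA n i) ⟨hi, h⟩]
      have h1 : mAB n 0 * mA n i = mBA n i := by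
        rw [mdmul, MM.nrm_of_valid n (x := mAB n 0) (md_AB0_valid n),
          MM.nrm_of_valid n (x := mA n i) ⟨hi, h⟩]
        show (if 0 = 0 ∧ i ≤ n then MM.BA i else MM.Z) = MM.BA i
        rw [if_pos ⟨rfl, h⟩]
      rw [h1, mdmul, MM.nrm_of_valid n (x := mBA n i) ⟨hi, h⟩,
        MM.nrm_of_valid n (x := mAB n 0) (md_AB0_valid n)]
      rfl
    · rw [show MM.nrm n (mA n i) = mZ n by
        exact if_neg (fun h : MM.valid n (MM.A i) => by simp only [MM.valid] at h; omega)]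
      rw [mul_Z_md, Z_mul_md]

def phi (n : ℕ) (hn : 1 ≤ n) : Sn n → Md n :=
  Quotient.lift (F n) (fun p q h => hker n hn h)

lemma phi_smk (n : ℕ) (hn : 1 ≤ n) (w : W2) : phi n hn (smk n w) = F n w := rfl

lemma phi_zz (n : ℕ) (hn : 1 ≤ n) : phi n hn (zz n) = mZ n := rfl

lemma phi_sb (n : ℕ) (hn : 1 ≤ n) : phi n hn (sb n) = mAB n 0 := by
  show F n (gb : W2) = _
  rw [F_coe, fM_gb]

lemma phi_absb (n : ℕ) (hn : 1 ≤ n) {i : ℕ} (hi : 1 ≤ i) (hin : i ≤ n) :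
    phi n hn (sa n i * sb n) = mAB n i := by
  rw [show sa n i * sb n = sm n (apow i * gb) from (sm_mul n _ _).symm]
  show F n ((apow i * gb : FreeSemigroup Bool) : W2) = _
  rw [F_coe, map_mul, fM_gb, fM_apow' n hn i hi, MM.nrm_of_valid n (x := mA n i) ⟨hi, hin⟩,
    mdmul, MM.nrm_of_valid n (x := mA n i) ⟨hi, hin⟩,
    MM.nrm_of_valid n (x := mAB n 0) (md_AB0_valid n)]
  show (if i + 0 ≤ n then MM.AB (i + 0) else MM.Z) = MM.AB i
  rw [if_pos (by omega : i + 0 ≤ n)]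
  norm_num

lemma phi_bsa (n : ℕ) (hn : 1 ≤ n) {i : ℕ} (hi : 1 ≤ i) (hin : i ≤ n) :
    phi n hn (sb n * sa n i) = mBA n i := by
  rw [show sb n * sa n i = sm n (gb * apow i) from (sm_mul n _ _).symm]
  show F n ((gb * apow i : FreeSemigroup Bool) : W2) = _
  rw [F_coe, map_mul, fM_gb, fM_apow' n hn i hi, MM.nrm_of_valid n (x := mA n i) ⟨hi, hin⟩,
    mdmul, MM.nrm_of_valid n (x := mA n i) ⟨hi, hin⟩,
    MM.nrm_of_valid n (x := mAB n 0) (md_AB0_valid n)]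
  show (if 0 = 0 ∧ i ≤ n then MM.BA i else MM.Z) = MM.BA i
  rw [if_pos ⟨rfl, hin⟩]

/-! ### the central elements -/

lemma central_zz (n : ℕ) : zz n ∈ Set.center (Sn n) :=
  Semigroup.mem_center_iff.2 fun g => by rw [zz_mul, mul_zz]

lemma central_ab (n : ℕ) (hn : 1 ≤ n) : sa n n * sb n ∈ Set.center (Sn n) := by
  refine Semigroup.mem_center_iff.2 fun g => ?_
  rcases good_all n hn g with rfl | ⟨i, hi1, hin, rfl⟩ | rfl | ⟨i, hi1, hin, rfl⟩ |
    ⟨i, hi1, hin, rfl⟩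
  · rw [zz_mul, mul_zz]
  · rw [L11 n hi1 hn, sa_hi n (by omega), zz_mul, absa n hn hi1]
  · rw [L5 n hn, L6]
  · rw [L1 n hi1 hn, L1 n hn hi1]
  · rw [L3 n hi1 hn, L2 n hn]

lemma central_ba (n : ℕ) (hn : 1 ≤ n) : sb n * sa n n ∈ Set.center (Sn n) := by
  refine Semigroup.mem_center_iff.2 fun g => ?_
  rcases good_all n hn g with rfl | ⟨i, hi1, hin, rfl⟩ | rfl | ⟨i, hi1, hin, rfl⟩ |
    ⟨i, hi1, hin, rfl⟩
  · rw [zz_mul, mul_zz]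
  · rw [L9 n hi1 hn, L12 n hn hi1, sa_hi n (by omega), mul_zz]
  · rw [L7, r4 n hn]
  · rw [L2 n hi1, L3 n hn hi1]
  · rw [L4 n hi1, L4 n hn]

theorem Sn_center (n : ℕ) (hn : 1 ≤ n) :
    Set.center (Sn n) =
      {smk n 0, smk n ((apow n * gb : FreeSemigroup Bool) : W2),
        smk n ((gb * apow n : FreeSemigroup Bool) : W2)} := by
  have e2 : smk n ((apow n * gb : FreeSemigroup Bool) : W2) = sa n n * sb n := sm_mul n _ _
  have e3 : smk n ((gb * apow n : FreeSemigroup Bool) : W2) = sb n * sa n n := sm_mul n _ _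
  ext x
  simp only [Set.mem_insert_iff, Set.mem_singleton_iff, e2, e3]
  constructor
  · intro hx
    have hg := Semigroup.mem_center_iff.1 hx
    rcases good_all n hn x with rfl | ⟨i, hi1, hin, rfl⟩ | rfl | ⟨i, hi1, hin, rfl⟩ |
      ⟨i, hi1, hin, rfl⟩
    · exact Or.inl rfl
    · exfalso
      have h := hg (sb n)
      have h2 := congrArg (phi n hn) h
      rw [phi_bsa n hn hi1 hin, phi_absb n hn hi1 hin] at h2
      exact MM.noConfusion h2
    · exfalso
      have h := hg (sa n 1)
      have h2 := congrArg (phi n hn) h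
      rw [phi_absb n hn le_rfl hn, phi_bsa n hn le_rfl hn] at h2
      exact MM.noConfusion h2
    · rcases eq_or_lt_of_le hin with he | he
      · refine Or.inr (Or.inl ?_)
        rw [he]
      · exfalso
        have h := hg (sa n 1)
        rw [L11 n le_rfl hi1, absa n hi1 le_rfl] at h
        have h2 := congrArg (phi n hn) h
        rw [phi_absb n hn (by omega) (by omega), phi_zz] at h2
        exact MM.noConfusion h2
    · rcases eq_or_lt_of_le hin with he | he
      · refine Or.inr (Or.inr ?_)
        rw [he]
      · exfalso
        have h := hg (sa n 1)
        rw [L9 n le_rfl hi1, L12 n hi1 le_rfl] at h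
        have h2 := congrArg (phi n hn) h
        rw [phi_zz, phi_bsa n hn (by omega) (by omega)] at h2
        exact MM.noConfusion h2
  · rintro (rfl | rfl | rfl)
    · exact central_zz n
    · exact central_ab n hn
    · exact central_ba n hn
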